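/- arXiv:2103.11656 — 4 statements merged into one kernel-verified Lean document; each statement's English description precedes it below -/
import Mathlib

section
/- Let 0 < r₁ < R and let ψ : [r₁, R] → ℝ be continuous with ψ(r₁) ≠ 0. Define F_n = ∫_{r₁}^{R} ψ(r)/r^n dr. Then F_n · (n · r₁^{n-1}) / ψ(r₁) → 1 as n → ∞; that is, F_n ∼ ψ(r₁)/(n r₁^{n-1}). -/
open Real Filter Set MeasureTheory Topology

theorem moment_asymptotic_first_order (r₁ R : ℝ) (hr₁ : 0 < r₁) (hR : r₁ < R)
    (ψ : ℝ → ℝ) (hc : ContinuousOn ψ (Set.Icc r₁ R)) (hne : ψ r₁ ≠ 0) :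
    Tendsto (fun n : ℕ =>
        (∫ r in r₁..R, ψ r / r ^ n) * ((n : ℝ) * r₁ ^ ((n : ℝ) - 1)) / ψ r₁)
      atTop (nhds 1) := by
  have hRpos : 0 < R := hr₁.trans hR
  set s : Set ℝ := Set.Icc r₁ R with hs_def
  set φ : ℕ → ℝ → ℝ := fun n x => (n : ℝ) * r₁ ^ (n - 1) / x ^ n with hφ_def
  have hmem : r₁ ∈ s := ⟨le_refl _, hR.le⟩
  -- positivity of φ on s
  have hnφ : ∀ᶠ n in atTop, ∀ x ∈ s, 0 ≤ φ n x := by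
    filter_upwards with n x hx
    have hx0 : 0 < x := hr₁.trans_le hx.1
    positivity
  -- uniform convergence to 0 away from r₁
  have hlφ : ∀ u : Set ℝ, IsOpen u → r₁ ∈ u → TendstoUniformlyOn φ 0 atTop (s \ u) := by
    intro u hu hru
    obtain ⟨δ, hδ, hball⟩ := Metric.isOpen_iff.1 hu r₁ hru
    have hbound : ∀ x ∈ s \ u, r₁ + δ ≤ x := by
      rintro x ⟨hxs, hxu⟩
      by_contra h
      push_neg at h
      exact hxu (hball (by rw [Metric.mem_ball, Real.dist_eq, abs_lt]; constructor <;> linarith [hxs.1]))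
    have hlim : Tendsto (fun n : ℕ => (n : ℝ) / r₁ * (r₁ / (r₁ + δ)) ^ n) atTop (𝓝 0) := by
      have h1 : Tendsto (fun n : ℕ => (n : ℝ) ^ 1 * (r₁ / (r₁ + δ)) ^ n) atTop (𝓝 0) :=
        tendsto_pow_const_mul_const_pow_of_lt_one 1 (by positivity)
          (by rw [div_lt_one (by linarith)]; linarith)
      have := h1.div_const r₁
      simpa [pow_one, mul_div_assoc, mul_comm, mul_div_right_comm] using this
    rw [Metric.tendstoUniformlyOn_iff]
    intro ε hε
    filter_upwards [(hlim.eventually (gt_mem_nhds hε) : _)] with n hn x hx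
    have hx1 : r₁ + δ ≤ x := hbound x hx
    have hx0 : 0 < x := by linarith
    have h1 : φ n x ≤ (n : ℝ) / r₁ * (r₁ / (r₁ + δ)) ^ n := by
      rw [hφ_def]
      have hxpow : (r₁ + δ) ^ n ≤ x ^ n := pow_le_pow_left₀ (by linarith) hx1 n
      have h2 : (n : ℝ) * r₁ ^ (n - 1) / x ^ n ≤ (n : ℝ) * r₁ ^ (n - 1) / (r₁ + δ) ^ n := by
        apply div_le_div_of_nonneg_left (by positivity) (by positivity) hxpow
      refine h2.trans_eq ?_
      rcases Nat.eq_zero_or_pos n with h0 | h0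
      · simp [h0]
      · rw [div_pow, ← Nat.sub_add_cancel h0, pow_succ]
        field_simp
        ring_nf
        simp
    have h0 : 0 ≤ φ n x := by
      rw [hφ_def]; positivity
    rw [Real.dist_eq, Pi.zero_apply, abs_sub_comm, abs_of_nonneg (by simpa using h0)]
    simpa using lt_of_le_of_lt h1 (by simpa [Real.dist_eq, abs_of_nonneg (by positivity : (0:ℝ) ≤ (n:ℝ)/r₁ * (r₁/(r₁+δ))^n)] using hn)
  -- integral of φ over s tends to 1
  have hiφ : Tendsto (fun n : ℕ => ∫ x in s, φ n x) atTop (𝓝 1) := by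
    have hgeo : Tendsto (fun n : ℕ => (r₁ / R) ^ (n - 1)) atTop (𝓝 0) :=
      (tendsto_pow_atTop_nhds_zero_of_lt_one (by positivity) ((div_lt_one hRpos).2 hR)).comp
        (tendsto_sub_atTop_nat 1)
    have hrat : Tendsto (fun n : ℕ => (n : ℝ) / ((n : ℝ) + (-1))) atTop (𝓝 1) :=
      tendsto_natCast_div_add_atTop (-1 : ℝ)
    have hlim : Tendsto (fun n : ℕ => (n : ℝ) / ((n : ℝ) + (-1)) * (1 - (r₁ / R) ^ (n - 1)))
        atTop (𝓝 1) := by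
      have := hrat.mul ((tendsto_const_nhds (x := (1:ℝ))).sub hgeo)
      simpa using this
    refine hlim.congr' ?_
    filter_upwards [eventually_ge_atTop 2] with n hn
    have hzero : (0 : ℝ) ∉ Set.uIcc r₁ R := by
      rw [Set.uIcc_of_le hR.le]; rintro ⟨h0, -⟩; linarith
    have hint := integral_zpow (a := r₁) (b := R) (n := -(n : ℤ)) (Or.inr ⟨by omega, hzero⟩)
    have hcalc : ∫ x in s, φ n x = ((n : ℝ) * r₁ ^ (n - 1)) * ∫ x in r₁..R, x ^ (-(n : ℤ)) := by
      rw [hs_def, MeasureTheory.integral_Icc_eq_integral_Ioc,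
        ← intervalIntegral.integral_of_le hR.le, ← intervalIntegral.integral_const_mul]
      refine intervalIntegral.integral_congr fun x hx => ?_
      show (n : ℝ) * r₁ ^ (n - 1) / x ^ n = _
      rw [zpow_neg, zpow_natCast, div_eq_mul_inv]
    have hexp : (-(n : ℤ) + 1) = -((n - 1 : ℕ) : ℤ) := by
      have : (1:ℕ) ≤ n := by omega
      push_cast [this]; ring
    have hn2 : (2:ℝ) ≤ (n:ℝ) := by exact_mod_cast hn
    have hn1 : (n : ℝ) + -1 ≠ 0 := by intro h; linarith
    have hn1' : (n : ℝ) - 1 ≠ 0 := by intro h; linarith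
    have hRp : R ^ (n - 1) ≠ 0 := by positivity
    have hr1p : r₁ ^ (n - 1) ≠ 0 := by positivity
    rw [hcalc, hint, hexp, zpow_neg, zpow_natCast, zpow_neg, zpow_natCast,
      Int.cast_neg, Int.cast_natCast, div_pow]
    have hd : (-(n:ℝ) + 1) ≠ 0 := by intro h; linarith
    rw [← mul_div_assoc, eq_div_iff hd]
    field_simp
    ring
  -- measurability of φ
  have h'iφ : ∀ᶠ n in atTop, AEStronglyMeasurable (φ n) (volume.restrict s) := by
    filter_upwards with n
    apply ContinuousOn.aestronglyMeasurable _ measurableSet_Icc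
    apply ContinuousOn.div continuousOn_const (continuousOn_pow n)
    intro x hx
    have : 0 < x := hr₁.trans_le hx.1
    positivity
  -- apply the peak function theorem
  have hmg : IntegrableOn ψ s := hc.integrableOn_Icc
  have hcg : Tendsto ψ (𝓝[s] r₁) (𝓝 (ψ r₁)) := hc.continuousWithinAt hmem
  have hmain : Tendsto (fun n : ℕ => ∫ x in s, φ n x • ψ x) atTop (𝓝 (ψ r₁)) :=
    tendsto_setIntegral_peak_smul_of_integrableOn_of_tendsto
      measurableSet_Icc measurableSet_Icc subset_rfl self_mem_nhdsWithin
      measure_Icc_lt_top.ne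
      hnφ hlφ hiφ h'iφ hmg hcg
  -- conclude
  have hfinal := hmain.div_const (ψ r₁)
  rw [div_self hne] at hfinal
  refine hfinal.congr' ?_
  filter_upwards [eventually_ge_atTop 1] with n hn
  have hexp : r₁ ^ ((n : ℝ) - 1) = r₁ ^ (n - 1 : ℕ) := by
    rw [← Real.rpow_natCast r₁ (n - 1)]
    congr 1
    have : (1:ℕ) ≤ n := hn
    push_cast [this]; ring
  have hcalc : ∫ x in s, φ n x • ψ x = ((n : ℝ) * r₁ ^ (n - 1)) * ∫ r in r₁..R, ψ r / r ^ n := by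
    rw [hs_def, MeasureTheory.integral_Icc_eq_integral_Ioc,
      ← intervalIntegral.integral_of_le hR.le, ← intervalIntegral.integral_const_mul]
    refine intervalIntegral.integral_congr fun x hx => ?_
    show ((n : ℝ) * r₁ ^ (n - 1) / x ^ n) • ψ x = _
    rw [smul_eq_mul]
    ring
  rw [hcalc, hexp]
  ring
end

section
/- Let 0 < r₁ < R and let ψ : [r₁, R] → ℝ be continuously differentiable with ψ(r₁) = 0 and ψ'(r₁) ≠ 0. Define F_n = ∫_{r₁}^{R} ψ(r)/r^n dr. Then F_n ∼ ψ'(r₁)/(n² r₁^{n-2}) as n → ∞, i.e., F_n · n² r₁^{n-2} / ψ'(r₁) → 1. -/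
open Real Filter Set
open MeasureTheory intervalIntegral

lemma aux_int_pow (a b : ℝ) (ha : 0 < a) (hab : a ≤ b) (n : ℕ) (hn : 1 ≤ n) :
    ∫ t in a..b, 1 / t ^ (n+1) = ((a ^ n)⁻¹ - (b ^ n)⁻¹) / n := by
  have h0 : (0:ℝ) ∉ Set.uIcc a b := by
    rw [Set.uIcc_of_le hab]
    intro h
    exact absurd h.1 (not_le.2 ha)
  have h1 : ∫ t in a..b, 1 / t ^ (n+1) = ∫ t in a..b, t ^ (-(n+1) : ℤ) := by
    apply intervalIntegral.integral_congr
    intro t ht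
    simp only [one_div, zpow_neg]
    norm_cast
  have hne : (-(n+1) : ℤ) ≠ -1 := by omega
  rw [h1, integral_zpow (Or.inr ⟨hne, h0⟩)]
  have e : (-(n+1) : ℤ) + 1 = -(n:ℤ) := by ring
  rw [e]
  have hb : (0:ℝ) < b := lt_of_lt_of_le ha hab
  rw [zpow_neg, zpow_neg, zpow_natCast, zpow_natCast]
  push_cast
  ring

lemma key_limit (a b : ℝ) (ha : 0 < a) (hab : a < b) (g : ℝ → ℝ)
    (hg : ContinuousOn g (Set.Icc a b)) :
    Tendsto (fun n : ℕ => (n : ℝ) * a ^ n * ∫ t in a..b, g t / t ^ (n+1))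
      atTop (nhds (g a)) := by
  have hab' : a ≤ b := hab.le
  have hpos : ∀ t ∈ Set.Icc a b, (0:ℝ) < t := fun t ht => lt_of_lt_of_le ha ht.1
  have hcont1 : ∀ n : ℕ, ContinuousOn (fun t : ℝ => 1 / t ^ (n+1)) (Set.Icc a b) := by
    intro n
    exact continuousOn_const.div ((continuous_pow (n+1)).continuousOn)
      (fun t ht => pow_ne_zero _ (hpos t ht).ne')
  have hcontg : ∀ n : ℕ, ContinuousOn (fun t : ℝ => g t / t ^ (n+1)) (Set.Icc a b) := by
    intro n
    exact hg.div ((continuous_pow (n+1)).continuousOn)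
      (fun t ht => pow_ne_zero _ (hpos t ht).ne')
  have hcontd : ∀ n : ℕ, ContinuousOn (fun t : ℝ => (g t - g a) / t ^ (n+1)) (Set.Icc a b) := by
    intro n
    exact (hg.sub continuousOn_const).div ((continuous_pow (n+1)).continuousOn)
      (fun t ht => pow_ne_zero _ (hpos t ht).ne')
  have hint1 : ∀ (n : ℕ) (x y : ℝ), x ∈ Set.Icc a b → y ∈ Set.Icc a b →
      IntervalIntegrable (fun t : ℝ => 1 / t ^ (n+1)) volume x y := by
    intro n x y hx hy
    exact ((hcont1 n).mono (Set.uIcc_subset_Icc hx hy)).intervalIntegrable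
  have hintg : ∀ (n : ℕ) (x y : ℝ), x ∈ Set.Icc a b → y ∈ Set.Icc a b →
      IntervalIntegrable (fun t : ℝ => g t / t ^ (n+1)) volume x y := by
    intro n x y hx hy
    exact ((hcontg n).mono (Set.uIcc_subset_Icc hx hy)).intervalIntegrable
  have hintd : ∀ (n : ℕ) (x y : ℝ), x ∈ Set.Icc a b → y ∈ Set.Icc a b →
      IntervalIntegrable (fun t : ℝ => (g t - g a) / t ^ (n+1)) volume x y := by
    intro n x y hx hy
    exact ((hcontd n).mono (Set.uIcc_subset_Icc hx hy)).intervalIntegrable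
  have haI : a ∈ Set.Icc a b := Set.left_mem_Icc.2 hab'
  have hbI : b ∈ Set.Icc a b := Set.right_mem_Icc.2 hab'
  have decomp : ∀ n : ℕ, (n:ℝ) * a ^ n * ∫ t in a..b, g t / t ^ (n+1)
      = g a * ((n:ℝ) * a ^ n * ∫ t in a..b, 1 / t ^ (n+1))
        + (n:ℝ) * a ^ n * ∫ t in a..b, (g t - g a) / t ^ (n+1) := by
    intro n
    have e1 : ∫ t in a..b, g t / t ^ (n+1)
        = (∫ t in a..b, g a * (1 / t ^ (n+1))) + ∫ t in a..b, (g t - g a) / t ^ (n+1) := by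
      rw [← intervalIntegral.integral_add ((hint1 n a b haI hbI).const_mul (g a))
        (hintd n a b haI hbI)]
      apply intervalIntegral.integral_congr
      intro t ht
      ring
    rw [e1, intervalIntegral.integral_const_mul]
    ring
  have hab0 : 0 ≤ a / b := div_nonneg ha.le (ha.trans hab).le
  have hab1 : a / b < 1 := (div_lt_one (ha.trans hab)).2 hab
  have t1 : Tendsto (fun n : ℕ => (n:ℝ) * a ^ n * ∫ t in a..b, 1 / t ^ (n+1))
      atTop (nhds 1) := by
    have he : (fun n : ℕ => 1 - (a/b) ^ n) =ᶠ[atTop]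
        (fun n : ℕ => (n:ℝ) * a ^ n * ∫ t in a..b, 1 / t ^ (n+1)) := by
      filter_upwards [eventually_ge_atTop 1] with n hn
      rw [aux_int_pow a b ha hab' n hn]
      have hb : (0:ℝ) < b := ha.trans hab
      have h1 : a ^ n ≠ 0 := pow_ne_zero _ ha.ne'
      have h2 : b ^ n ≠ 0 := pow_ne_zero _ hb.ne'
      have h3 : (n:ℝ) ≠ 0 := Nat.cast_ne_zero.2 (by omega)
      rw [div_pow]
      field_simp
    have : Tendsto (fun n : ℕ => 1 - (a/b) ^ n) atTop (nhds 1) := by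
      have := tendsto_pow_atTop_nhds_zero_of_lt_one hab0 hab1
      simpa using tendsto_const_nhds.sub this
    exact this.congr' he
  have t2 : Tendsto (fun n : ℕ => (n:ℝ) * a ^ n * ∫ t in a..b, (g t - g a) / t ^ (n+1))
      atTop (nhds 0) := by
    rw [NormedAddCommGroup.tendsto_nhds_zero]
    intro ε hε
    -- continuity at a
    have hca := hg a haI
    rw [Metric.continuousWithinAt_iff] at hca
    obtain ⟨δ, hδpos, hδ⟩ := hca (ε/4) (by positivity)
    set c : ℝ := min (a + δ/2) b with hc
    have hac : a < c := lt_min (by linarith) hab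
    have hcb : c ≤ b := min_le_right _ _
    have hcI : c ∈ Set.Icc a b := ⟨hac.le, hcb⟩
    have hc0 : (0:ℝ) < c := ha.trans hac
    have hnear : ∀ t ∈ Set.Icc a c, |g t - g a| ≤ ε/4 := by
      intro t ht
      have htab : t ∈ Set.Icc a b := ⟨ht.1, ht.2.trans hcb⟩
      have : dist t a < δ := by
        rw [Real.dist_eq, abs_of_nonneg (by linarith [ht.1])]
        have : t ≤ a + δ/2 := ht.2.trans (min_le_left _ _)
        linarith
      have := hδ htab this
      rw [Real.dist_eq] at this
      exact this.le
    obtain ⟨M, hM⟩ := isCompact_Icc.exists_bound_of_continuousOn (hg.sub continuousOn_const)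
    have hM0 : 0 ≤ M := le_trans (norm_nonneg _) (hM a haI)
    have hac1 : a / c < 1 := (div_lt_one hc0).2 hac
    have hac0 : 0 ≤ a / c := div_nonneg ha.le hc0.le
    have htail : Tendsto (fun n : ℕ => (M * (b - c) / c) * ((n:ℝ)^1 * (a/c) ^ n))
        atTop (nhds 0) := by
      have := tendsto_pow_const_mul_const_pow_of_lt_one 1 hac0 hac1
      simpa using this.const_mul (M * (b - c) / c)
    have h2 : ∀ᶠ n : ℕ in atTop, (M * (b - c) / c) * ((n:ℝ)^1 * (a/c) ^ n) < ε/2 :=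
      htail.eventually_lt_const (by positivity)
    filter_upwards [h2, eventually_ge_atTop 1] with n hTn hn1
    have hn0 : (0:ℝ) < (n:ℝ) := by exact_mod_cast Nat.lt_of_lt_of_le Nat.zero_lt_one hn1
    have hna : 0 ≤ (n:ℝ) * a ^ n := by positivity
    have hsplit : (∫ t in a..b, (g t - g a) / t ^ (n+1))
        = (∫ t in a..c, (g t - g a) / t ^ (n+1)) + ∫ t in c..b, (g t - g a) / t ^ (n+1) :=
      (intervalIntegral.integral_add_adjacent_intervals
        (hintd n a c haI hcI) (hintd n c b hcI hbI)).symm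
    have han0 : a ^ n ≠ 0 := pow_ne_zero _ ha.ne'
    have hcn0 : (0:ℝ) < c ^ n := pow_pos hc0 n
    -- near bound
    have hnearint : ‖∫ t in a..c, (g t - g a) / t ^ (n+1)‖
        ≤ (ε/4) * (((a ^ n)⁻¹ - (c ^ n)⁻¹) / n) := by
      have hb1 : ∀ᵐ t ∂(volume.restrict (Set.uIoc a c)),
          ‖(g t - g a) / t ^ (n+1)‖ ≤ (ε/4) * (1 / t ^ (n+1)) := by
        refine (ae_restrict_mem measurableSet_uIoc).mono ?_
        intro t ht
        rw [Set.uIoc_of_le hac.le] at ht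
        have htI : t ∈ Set.Icc a c := ⟨ht.1.le, ht.2⟩
        have ht0 : (0:ℝ) < t := ha.trans ht.1
        rw [norm_div, Real.norm_eq_abs, Real.norm_eq_abs,
          abs_of_pos (pow_pos ht0 _), mul_one_div]
        gcongr
        exact hnear t htI
      have h3 := intervalIntegral.norm_integral_le_abs_of_norm_le hb1
        ((hint1 n a c haI hcI).const_mul (ε/4))
      rw [intervalIntegral.integral_const_mul, aux_int_pow a c ha hac.le n hn1] at h3
      have hinv : (c ^ n)⁻¹ ≤ (a ^ n)⁻¹ := by
        gcongr
      have hnn : 0 ≤ (ε/4) * (((a ^ n)⁻¹ - (c ^ n)⁻¹) / n) := by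
        have hd : 0 ≤ (a ^ n)⁻¹ - (c ^ n)⁻¹ := by linarith
        positivity
      rwa [abs_of_nonneg hnn] at h3
    have hA : (n:ℝ) * a ^ n * ‖∫ t in a..c, (g t - g a) / t ^ (n+1)‖ ≤ ε/4 := by
      calc (n:ℝ) * a ^ n * ‖∫ t in a..c, (g t - g a) / t ^ (n+1)‖
          ≤ (n:ℝ) * a ^ n * ((ε/4) * (((a ^ n)⁻¹ - (c ^ n)⁻¹) / n)) :=
            mul_le_mul_of_nonneg_left hnearint hna
        _ = (ε/4) * (1 - (a/c) ^ n) := by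
            rw [div_pow]
            field_simp
        _ ≤ ε/4 := by
            have h4 : (0:ℝ) ≤ (a/c) ^ n := pow_nonneg hac0 n
            nlinarith
    -- tail bound
    have hconstbd : ∀ t ∈ Set.uIoc c b, ‖(g t - g a) / t ^ (n+1)‖ ≤ M / c ^ (n+1) := by
      intro t ht
      rw [Set.uIoc_of_le hcb] at ht
      have htI : t ∈ Set.Icc a b := ⟨hac.le.trans ht.1.le, ht.2⟩
      have ht0 : (0:ℝ) < t := hc0.trans ht.1
      rw [norm_div, Real.norm_eq_abs (t ^ (n+1)), abs_of_pos (pow_pos ht0 _)]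
      have hnum : ‖g t - g a‖ ≤ M := hM t htI
      rw [Real.norm_eq_abs] at hnum
      exact div_le_div₀ hM0 hnum (pow_pos hc0 _) (pow_le_pow_left₀ hc0.le ht.1.le _)
    have htailint := intervalIntegral.norm_integral_le_of_norm_le_const hconstbd
    have hB : (n:ℝ) * a ^ n * ‖∫ t in c..b, (g t - g a) / t ^ (n+1)‖ < ε/2 := by
      calc (n:ℝ) * a ^ n * ‖∫ t in c..b, (g t - g a) / t ^ (n+1)‖
          ≤ (n:ℝ) * a ^ n * (M / c ^ (n+1) * |b - c|) :=
            mul_le_mul_of_nonneg_left htailint hna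
        _ = (M * (b - c) / c) * ((n:ℝ)^1 * (a/c) ^ n) := by
            rw [abs_of_nonneg (by linarith : (0:ℝ) ≤ b - c), div_pow, pow_succ, pow_one]
            field_simp
        _ < ε/2 := hTn
    have hnorm : ‖(n:ℝ) * a ^ n * ∫ t in a..b, (g t - g a) / t ^ (n+1)‖
        = (n:ℝ) * a ^ n * ‖∫ t in a..b, (g t - g a) / t ^ (n+1)‖ := by
      rw [norm_mul, Real.norm_eq_abs ((n:ℝ) * a ^ n), abs_of_nonneg hna]
    rw [hnorm]
    calc (n:ℝ) * a ^ n * ‖∫ t in a..b, (g t - g a) / t ^ (n+1)‖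
        ≤ (n:ℝ) * a ^ n * (‖∫ t in a..c, (g t - g a) / t ^ (n+1)‖
            + ‖∫ t in c..b, (g t - g a) / t ^ (n+1)‖) := by
          rw [hsplit]
          exact mul_le_mul_of_nonneg_left (norm_add_le _ _) hna
      _ = (n:ℝ) * a ^ n * ‖∫ t in a..c, (g t - g a) / t ^ (n+1)‖
            + (n:ℝ) * a ^ n * ‖∫ t in c..b, (g t - g a) / t ^ (n+1)‖ := by ring
      _ < ε := by linarith
  have := (t1.const_mul (g a)).add t2
  rw [mul_one, add_zero] at this
  exact this.congr (fun n => (decomp n).symm)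

lemma final_alg (I p q u w r μ : ℝ) (hp : p ≠ 0) (hμ : μ ≠ 0)
    (hμ1 : μ + 1 ≠ 0) (hw : w ≠ 0) (hr : r ≠ 0) :
    (μ+2)^2/((μ+1)*μ) * ((μ * u * I)/p) - (μ+2)^2/(μ+1) * (u/w) * (q/(r*p))
      = (q * ((w⁻¹ * r⁻¹) / -(μ+1)) + 1/(μ+1) * I) * ((μ+2)^2 * u) / p := by
  rw [div_neg]
  field_simp
  ring

theorem moment_asymptotic_second_order (r₁ R : ℝ) (hr₁ : 0 < r₁) (hR : r₁ < R)
    (ψ ψ' : ℝ → ℝ)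
    (hder : ∀ r ∈ Set.Icc r₁ R, HasDerivAt ψ (ψ' r) r)
    (hc : ContinuousOn ψ' (Set.Icc r₁ R))
    (h0 : ψ r₁ = 0) (hne : ψ' r₁ ≠ 0) :
    Tendsto (fun n : ℕ =>
        (∫ r in r₁..R, ψ r / r ^ n) * ((n : ℝ) ^ 2 * r₁ ^ ((n : ℝ) - 2)) / ψ' r₁)
      atTop (nhds 1) := by
  have hR0 : (0:ℝ) < R := hr₁.trans hR
  have huIcc : Set.uIcc r₁ R = Set.Icc r₁ R := Set.uIcc_of_le hR.le
  have hpos : ∀ t ∈ Set.Icc r₁ R, (0:ℝ) < t := fun t ht => lt_of_lt_of_le hr₁ ht.1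
  -- integration by parts
  have ibp : ∀ k : ℕ, 1 ≤ k → (∫ r in r₁..R, ψ r / r ^ (k+1))
      = ψ R * ((R ^ k)⁻¹ / (-(k:ℝ))) + (1/(k:ℝ)) * ∫ r in r₁..R, ψ' r / r ^ k := by
    intro k hk
    have hk0 : (k:ℝ) ≠ 0 := Nat.cast_ne_zero.2 (by omega)
    set v : ℝ → ℝ := fun x => x ^ (-(k:ℤ)) / (-(k:ℝ)) with hv
    have hvd : ∀ x ∈ Set.uIcc r₁ R, HasDerivAt v (x ^ (-(k:ℤ)-1)) x := by
      intro x hx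
      rw [huIcc] at hx
      have hx0 : x ≠ 0 := (hpos x hx).ne'
      have h1 := (hasDerivAt_zpow (-(k:ℤ)) x (Or.inl hx0)).div_const (-(k:ℝ))
      refine h1.congr_deriv ?_
      rw [Int.cast_neg, Int.cast_natCast, mul_div_cancel_left₀ _ (neg_ne_zero.2 hk0)]
    have hud : ∀ x ∈ Set.uIcc r₁ R, HasDerivAt ψ (ψ' x) x := by rw [huIcc]; exact hder
    have hu'int : IntervalIntegrable ψ' volume r₁ R := by
      apply ContinuousOn.intervalIntegrable
      rw [huIcc]; exact hc
    have hv'int : IntervalIntegrable (fun x : ℝ => x ^ (-(k:ℤ)-1)) volume r₁ R := by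
      apply ContinuousOn.intervalIntegrable
      intro x hx
      rw [huIcc] at hx
      exact (continuousAt_zpow₀ _ _ (Or.inl (hpos x hx).ne')).continuousWithinAt
    have hibp := intervalIntegral.integral_mul_deriv_eq_deriv_mul hud hvd hu'int hv'int
    have hL : (∫ r in r₁..R, ψ r / r ^ (k+1)) = ∫ x in r₁..R, ψ x * x ^ (-(k:ℤ)-1) := by
      apply intervalIntegral.integral_congr
      intro t ht
      rw [huIcc] at ht
      have ht0 : t ≠ 0 := (hpos t ht).ne'
      show ψ t / t ^ (k+1) = ψ t * t ^ (-(k:ℤ)-1)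
      have he : (-(k:ℤ)-1) = -((k:ℤ)+1) := by ring
      rw [he, zpow_neg, div_eq_mul_inv]
      norm_cast
    have hE : (∫ x in r₁..R, ψ' x * v x) = -(1/(k:ℝ)) * ∫ r in r₁..R, ψ' r / r ^ k := by
      rw [← intervalIntegral.integral_const_mul]
      apply intervalIntegral.integral_congr
      intro t ht
      rw [huIcc] at ht
      have ht0 : t ≠ 0 := (hpos t ht).ne'
      show ψ' t * v t = -(1/(k:ℝ)) * (ψ' t / t ^ k)
      simp only [hv]
      rw [zpow_neg, zpow_natCast]
      field_simp
    rw [hL, hibp, hE, h0]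
    simp only [hv]
    rw [zpow_neg, zpow_natCast]
    ring
  -- key limit for ψ'
  have hG : Tendsto (fun m : ℕ => (m:ℝ) * r₁ ^ m * ∫ t in r₁..R, ψ' t / t ^ (m+1))
      atTop (nhds (ψ' r₁)) := key_limit r₁ R hr₁ hR ψ' hc
  have hGcomp : Tendsto (fun n : ℕ => ((n-2:ℕ):ℝ) * r₁ ^ (n-2) *
      ∫ t in r₁..R, ψ' t / t ^ ((n-2)+1)) atTop (nhds (ψ' r₁)) :=
    hG.comp (tendsto_sub_atTop_nat 2)
  -- coefficient limit
  have l1 : Tendsto (fun n : ℕ => ((n:ℝ)-1)) atTop atTop := by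
    simpa [sub_eq_add_neg] using tendsto_atTop_add_const_right atTop (-1:ℝ)
      tendsto_natCast_atTop_atTop
  have l2 : Tendsto (fun n : ℕ => ((n:ℝ)-2)) atTop atTop := by
    simpa [sub_eq_add_neg] using tendsto_atTop_add_const_right atTop (-2:ℝ)
      tendsto_natCast_atTop_atTop
  have hc1 : Tendsto (fun n : ℕ => (n:ℝ)^2/(((n:ℝ)-1)*((n:ℝ)-2))) atTop (nhds 1) := by
    have i1 : Tendsto (fun n : ℕ => ((n:ℝ)-1)⁻¹) atTop (nhds 0) := l1.inv_tendsto_atTop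
    have i2 : Tendsto (fun n : ℕ => ((n:ℝ)-2)⁻¹) atTop (nhds 0) := l2.inv_tendsto_atTop
    have hprod : Tendsto (fun n : ℕ => (1 + ((n:ℝ)-1)⁻¹) * (1 + 2*((n:ℝ)-2)⁻¹))
        atTop (nhds 1) := by
      have h8 := ((tendsto_const_nhds : Tendsto (fun _ : ℕ => (1:ℝ)) atTop (nhds 1)).add i1).mul
        ((tendsto_const_nhds : Tendsto (fun _ : ℕ => (1:ℝ)) atTop (nhds 1)).add (i2.const_mul 2))
      simpa using h8
    apply hprod.congr'
    filter_upwards [eventually_ge_atTop 3] with n hn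
    have hn3 : (3:ℝ) ≤ (n:ℝ) := by exact_mod_cast hn
    have h1 : ((n:ℝ)-1) ≠ 0 := by linarith
    have h2 : ((n:ℝ)-2) ≠ 0 := by linarith
    field_simp
    ring
  -- tail limit
  have hx0 : (0:ℝ) ≤ r₁/R := div_nonneg hr₁.le hR0.le
  have hx1 : r₁/R < 1 := (div_lt_one hR0).2 hR
  have hP : Tendsto (fun m : ℕ => ((m:ℝ)+2)^2 * (r₁/R)^m) atTop (nhds 0) := by
    have p2 := tendsto_pow_const_mul_const_pow_of_lt_one 2 hx0 hx1
    have p1 := tendsto_pow_const_mul_const_pow_of_lt_one 1 hx0 hx1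
    have p0 := tendsto_pow_atTop_nhds_zero_of_lt_one hx0 hx1
    have h6 := (p2.add ((p1.const_mul 4).add (p0.const_mul 4)))
    have h7 : Tendsto (fun m : ℕ => (m:ℝ)^2*(r₁/R)^m + (4*((m:ℝ)^1*(r₁/R)^m) + 4*(r₁/R)^m)) atTop (nhds 0) := by simpa using h6
    apply h7.congr
    intro m
    ring
  have hw0 : Tendsto (fun m : ℕ => ((m:ℝ)+2)^2/((m:ℝ)+1) * (r₁/R)^m) atTop (nhds 0) := by
    apply squeeze_zero_norm _ hP
    intro m
    have hxm : (0:ℝ) ≤ (r₁/R)^m := pow_nonneg hx0 m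
    have h1 : (0:ℝ) ≤ ((m:ℝ)+2)^2/((m:ℝ)+1) := by positivity
    rw [Real.norm_eq_abs, abs_of_nonneg (by positivity)]
    have : ((m:ℝ)+2)^2/((m:ℝ)+1) ≤ ((m:ℝ)+2)^2 := by
      apply div_le_self (by positivity)
      have : (0:ℝ) ≤ (m:ℝ) := Nat.cast_nonneg m
      linarith
    exact mul_le_mul_of_nonneg_right this hxm
  have hw : Tendsto (fun n : ℕ => ((n:ℝ)^2/((n:ℝ)-1)) * (r₁/R)^(n-2) * (ψ R/(R * ψ' r₁)))
      atTop (nhds 0) := by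
    have h5 := (hw0.comp (tendsto_sub_atTop_nat 2)).mul_const (ψ R/(R * ψ' r₁))
    rw [zero_mul] at h5
    apply h5.congr'
    filter_upwards [eventually_ge_atTop 3] with n hn
    have hcast : ((n-2:ℕ):ℝ) = (n:ℝ)-2 := by
      have : (2:ℕ) ≤ n := by omega
      push_cast [Nat.cast_sub this]
      ring
    simp only [Function.comp]
    rw [hcast]
    ring_nf
  -- combine
  have hu : Tendsto (fun n : ℕ => ((n:ℝ)^2/(((n:ℝ)-1)*((n:ℝ)-2)))
      * ((((n-2:ℕ):ℝ) * r₁ ^ (n-2) * ∫ t in r₁..R, ψ' t / t ^ ((n-2)+1)) / ψ' r₁))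
      atTop (nhds 1) := by
    have := hc1.mul (hGcomp.div_const (ψ' r₁))
    rwa [one_mul, div_self hne] at this
  have total := hu.sub hw
  rw [sub_zero] at total
  apply total.congr'
  filter_upwards [eventually_ge_atTop 3] with n hn
  set m : ℕ := n - 2 with hm
  have hnm : n = (m+1)+1 := by omega
  have hm1 : 1 ≤ m + 1 := by omega
  have hcastm : ((m:ℕ):ℝ) = (n:ℝ)-2 := by
    have h2n : (2:ℕ) ≤ n := by omega
    rw [hm]
    push_cast [Nat.cast_sub h2n]
    ring
  have hrpow : r₁ ^ ((n:ℝ) - 2) = r₁ ^ (m:ℕ) := by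
    rw [← hcastm, Real.rpow_natCast]
  have hexp : (∫ r in r₁..R, ψ r / r ^ n) = ∫ r in r₁..R, ψ r / r ^ ((m+1)+1) := by
    rw [← hnm]
  rw [hexp, ibp (m+1) hm1, hrpow]
  have hmcast : ((m+1:ℕ):ℝ) = (m:ℝ)+1 := by push_cast; ring
  have hncast : (n:ℝ) = (m:ℝ)+2 := by rw [hnm]; push_cast; ring
  rw [hmcast, hncast]
  have e1 : ((m:ℝ)+2-1) = (m:ℝ)+1 := by ring
  have e2 : ((m:ℝ)+2-2) = (m:ℝ) := by ring
  have hmne : ((m:ℝ)) ≠ 0 := Nat.cast_ne_zero.2 (by omega)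
  have hm2 : ((m:ℝ)+1) ≠ 0 := by positivity
  have hR' : R ≠ 0 := hR0.ne'
  have h10 : R ^ m ≠ 0 := pow_ne_zero _ hR'
  rw [e1, e2, div_pow]
  have hRm1 : (R ^ (m+1))⁻¹ = (R ^ m)⁻¹ * R⁻¹ := by rw [pow_succ, mul_inv]
  rw [hRm1]
  exact final_alg _ _ _ _ _ _ _ hne hmne hm2 h10 hR'
end

section
/- Let 0 < a < b. If ψ ∈ L²(a,b) satisfies ∫_a^b ψ(r)/r^{2n} dr = 0 for all integers n ≥ n₀ (for some fixed n₀ ∈ ℕ), then ψ = 0 almost everywhere on (a,b). -/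
open MeasureTheory Set

theorem totality_inverse_even_powers (a b : ℝ) (ha : 0 < a) (hab : a < b)
    (ψ : ℝ → ℝ) (hψ : MemLp ψ 2 (volume.restrict (Set.Ioo a b)))
    (n₀ : ℕ) (hmom : ∀ n : ℕ, n₀ ≤ n → (∫ r in a..b, ψ r / r ^ (2 * n)) = 0) :
    ∀ᵐ r ∂(volume.restrict (Set.Ioo a b)), ψ r = 0 := by
  set μ := volume.restrict (Set.Ioo a b) with hμ
  have hb : 0 < b := ha.trans hab
  have hfin : IsFiniteMeasure μ := by
    constructor
    rw [hμ, Measure.restrict_apply_univ]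
    exact measure_Ioo_lt_top
  -- ψ is integrable
  have hψ1 : Integrable ψ μ := by
    rw [← memLp_one_iff_integrable]
    exact hψ.mono_exponent (by norm_num)
  -- moments vanish on Ioo
  have hmom' : ∀ n : ℕ, n₀ ≤ n → (∫ x in Set.Ioo a b, ψ x * (x ^ (2 * n))⁻¹) = 0 := by
    intro n hn
    have := hmom n hn
    rw [intervalIntegral.integral_of_le hab.le, integral_Ioc_eq_integral_Ioo] at this
    simpa [div_eq_mul_inv] using this
  -- integrability of ψ times inverse powers
  have hint : ∀ m : ℕ, Integrable (fun x => ψ x * (x ^ m)⁻¹) μ := by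
    intro m
    have : Integrable (fun x => (x ^ m)⁻¹ * ψ x) μ := by
      apply hψ1.bdd_mul (c := (a ^ m)⁻¹)
      · exact ((measurable_id.pow_const m).inv).aestronglyMeasurable
      · rw [hμ, ae_restrict_iff' measurableSet_Ioo]
        filter_upwards with x hx
        have hax : a ≤ x := hx.1.le
        have hxpos : 0 < x := ha.trans hx.1
        have h1 : a ^ m ≤ x ^ m := pow_le_pow_left₀ ha.le hax m
        have h2 : (0:ℝ) < a ^ m := pow_pos ha m
        rw [Real.norm_eq_abs, abs_inv, abs_of_pos (pow_pos hxpos m)]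
        exact inv_anti₀ h2 h1
    simpa [mul_comm] using this
  apply ae_eq_zero_of_integral_contDiff_smul_eq_zero (hψ1.locallyIntegrable)
  intro g hg hgsupp
  have hgc : Continuous g := hg.continuous
  -- constants
  set C : ℝ := ∫ x, |ψ x| ∂μ with hC
  have hC0 : 0 ≤ C := integral_nonneg fun x => abs_nonneg _
  set D : ℝ := (a ^ (2 * n₀))⁻¹ * C with hD
  have hD0 : 0 ≤ D := mul_nonneg (inv_nonneg.mpr (pow_pos ha _).le) hC0
  set I : ℝ := ∫ x, g x • ψ x ∂μ with hI
  -- key bound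
  have key : ∀ ε : ℝ, 0 < ε → |I| ≤ ε * D := by
    intro ε hε
    -- approximate via Weierstrass after change of variables s = 1/r²
    set lo : ℝ := (b ^ 2)⁻¹ with hlo
    set hi : ℝ := (a ^ 2)⁻¹ with hhi
    set F : ℝ → ℝ := fun s => g ((Real.sqrt s)⁻¹) * (s ^ n₀)⁻¹ with hF
    have hlopos : 0 < lo := by positivity
    have hFcont : ContinuousOn F (Set.Icc lo hi) := by
      apply ContinuousOn.mul
      · apply hgc.comp_continuousOn
        apply ContinuousOn.inv₀
        · exact Real.continuous_sqrt.continuousOn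
        · intro s hs
          have : 0 < s := lt_of_lt_of_le hlopos hs.1
          positivity
      · apply ContinuousOn.inv₀ (by fun_prop)
        intro s hs
        have : 0 < s := lt_of_lt_of_le hlopos hs.1
        positivity
    obtain ⟨p, hp⟩ := exists_polynomial_near_of_continuousOn lo hi F hFcont ε hε
    -- the approximating function
    set h : ℝ → ℝ := fun r => p.eval ((r ^ 2)⁻¹) * (r ^ (2 * n₀))⁻¹ with hh
    -- ∫ ψ h = 0
    have hinth : (∫ x, ψ x * h x ∂μ) = 0 := by
      have hcongr : ∀ x ∈ Set.Ioo a b,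
          ψ x * h x = ∑ k ∈ Finset.range (p.natDegree + 1),
            p.coeff k * (ψ x * (x ^ (2 * (n₀ + k)))⁻¹) := by
        intro x hx
        have hxpos : 0 < x := ha.trans hx.1
        rw [hh]
        simp only [Polynomial.eval_eq_sum_range, Finset.sum_mul, Finset.mul_sum]
        apply Finset.sum_congr rfl
        intro k _
        have hpw : ((x ^ 2)⁻¹) ^ k * (x ^ (2 * n₀))⁻¹ = (x ^ (2 * (n₀ + k)))⁻¹ := by
          rw [inv_pow, ← pow_mul, ← mul_inv, ← pow_add]
          congr 1
          ring
        rw [← hpw]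
        ring
      rw [hμ] at *
      rw [setIntegral_congr_fun measurableSet_Ioo hcongr]
      rw [integral_finset_sum]
      · apply Finset.sum_eq_zero
        intro k _
        have := hmom' (n₀ + k) (Nat.le_add_right _ _)
        rw [integral_const_mul, this, mul_zero]
      · intro k _
        exact (hint (2 * (n₀ + k))).const_mul _
    -- bound |g - h| on Ioo
    have hbound : ∀ x ∈ Set.Ioo a b, |g x - h x| ≤ ε * (a ^ (2 * n₀))⁻¹ := by
      intro x hx
      have hxa : a ≤ x := hx.1.le
      have hxb : x ≤ b := hx.2.le
      have hxpos : 0 < x := ha.trans hx.1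
      have hs : (x ^ 2)⁻¹ ∈ Set.Icc lo hi := by
        constructor
        · exact inv_anti₀ (by positivity) (pow_le_pow_left₀ hxpos.le hxb 2)
        · exact inv_anti₀ (by positivity) (pow_le_pow_left₀ ha.le hxa 2)
      have hFval : F ((x ^ 2)⁻¹) = g x * x ^ (2 * n₀) := by
        simp only [hF]
        have h1 : (Real.sqrt ((x ^ 2)⁻¹))⁻¹ = x := by
          rw [Real.sqrt_inv, Real.sqrt_sq hxpos.le, inv_inv]
        have h2 : (((x ^ 2)⁻¹) ^ n₀)⁻¹ = x ^ (2 * n₀) := by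
          rw [← inv_pow, inv_inv, ← pow_mul, mul_comm]
        rw [h1, h2]
      have := hp _ hs
      rw [hFval] at this
      have hxp : (0:ℝ) < x ^ (2 * n₀) := pow_pos hxpos _
      have hap : (0:ℝ) < a ^ (2 * n₀) := pow_pos ha _
      have heq : g x - h x = (g x * x ^ (2 * n₀) - p.eval ((x ^ 2)⁻¹)) * (x ^ (2 * n₀))⁻¹ := by
        rw [hh]
        field_simp
      rw [heq, abs_mul, abs_inv, abs_of_pos hxp]
      have h3 : |g x * x ^ (2 * n₀) - p.eval ((x ^ 2)⁻¹)| ≤ ε := by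
        rw [abs_sub_comm]; exact this.le
      have h4 : (x ^ (2 * n₀))⁻¹ ≤ (a ^ (2 * n₀))⁻¹ :=
        inv_anti₀ hap (pow_le_pow_left₀ ha.le hxa _)
      exact mul_le_mul h3 h4 (by positivity) hε.le
    -- integrability of g * ψ and h * ψ
    have hgint : Integrable (fun x => g x * ψ x) μ := by
      apply hψ1.bdd_mul (hgc.aestronglyMeasurable) (c := ⨆ x, ‖g x‖)
      filter_upwards with x
      exact le_ciSup (hgc.norm.bddAbove_range_of_hasCompactSupport hgsupp.norm) x
    have hhcont : ContinuousOn h (Set.Icc a b) := by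
      apply ContinuousOn.mul
      · apply p.continuous_aeval.comp_continuousOn
        apply ContinuousOn.inv₀ (by fun_prop)
        intro x hx
        have : 0 < x := lt_of_lt_of_le ha hx.1
        positivity
      · apply ContinuousOn.inv₀ (by fun_prop)
        intro x hx
        have : 0 < x := lt_of_lt_of_le ha hx.1
        positivity
    obtain ⟨M, hM⟩ := (isCompact_Icc (a := a) (b := b)).exists_bound_of_continuousOn hhcont
    have hhint : Integrable (fun x => h x * ψ x) μ := by
      apply hψ1.bdd_mul (c := M)
      · have : Measurable h := by
          rw [hh]
          exact (((p.continuous).measurable.comp ((measurable_id.pow_const 2).inv)).mul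
            ((measurable_id.pow_const (2 * n₀)).inv))
        exact this.aestronglyMeasurable
      · rw [hμ, ae_restrict_iff' measurableSet_Ioo]
        filter_upwards with x hx
        exact hM x (Ioo_subset_Icc_self hx)
    -- conclude the bound on |I|
    have hIeq : I = ∫ x, (g x - h x) * ψ x ∂μ := by
      rw [hI]
      have : (∫ x, (g x - h x) * ψ x ∂μ)
          = (∫ x, g x * ψ x ∂μ) - ∫ x, h x * ψ x ∂μ := by
        rw [← integral_sub hgint hhint]
        congr 1; ext x; ring
      rw [this]
      have h0 : (∫ x, h x * ψ x ∂μ) = 0 := by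
        rw [← hinth]; congr 1; ext x; ring
      rw [h0, sub_zero]
      simp [smul_eq_mul]
    have step : ‖∫ x, (g x - h x) * ψ x ∂μ‖ ≤ ∫ x, ε * (a ^ (2 * n₀))⁻¹ * |ψ x| ∂μ := by
      apply norm_integral_le_of_norm_le ((hψ1.abs).const_mul _)
      rw [hμ, ae_restrict_iff' measurableSet_Ioo]
      filter_upwards with x hx
      rw [Real.norm_eq_abs, abs_mul]
      exact mul_le_mul_of_nonneg_right (hbound x hx) (abs_nonneg _)
    have step2 : (∫ x, ε * (a ^ (2 * n₀))⁻¹ * |ψ x| ∂μ) = ε * D := by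
      rw [integral_const_mul, hD, hC]; ring
    rw [Real.norm_eq_abs] at step
    rw [hIeq]
    linarith
  -- from the bound, conclude I = 0
  have hIz : I = 0 := by
    by_contra hcon
    have hIpos : 0 < |I| := abs_pos.mpr hcon
    have hk := key (|I| / (2 * (D + 1))) (by positivity)
    have h2 : |I| / (2 * (D + 1)) * D ≤ |I| / 2 := by
      rw [div_mul_eq_mul_div, div_le_div_iff₀ (by positivity) (by norm_num)]
      nlinarith [hIpos.le, hD0]
    linarith
  exact hIz
end

section
/- Let 0 < a < b, n₀ ∈ ℕ, and ψ ∈ L²(a,b). If the set {n ∈ ℕ : n ≥ n₀ and ∫_a^b ψ(r)/r^{2n} dr ≠ 0} is finite and ψ ≠ 0 in L²(a,b), then there exists n ≥ n₀ with ∫_a^b ψ(r)/r^{2n} dr ≠ 0; consequently, if ψ ≠ 0 then infinitely many of the moments ∫_a^b ψ(r)/r^{2n} dr (n ≥ n₀) are nonzero. -/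
open MeasureTheory Set

set_option maxHeartbeats 1000000 in
private lemma key_total (a b : ℝ) (ha : 0 < a) (hab : a < b) (N : ℕ) (ψ : ℝ → ℝ)
    (hint : Integrable ψ (volume.restrict (Set.Ioo a b)))
    (h0 : ∀ n, N ≤ n → ∫ r in Set.Ioo a b, ψ r / r ^ (2 * n) = 0) :
    ψ =ᵐ[volume.restrict (Set.Ioo a b)] 0 := by
  set μ := volume.restrict (Set.Ioo a b) with hμ
  have hIw : ∀ w : ℝ → ℝ, ContinuousOn w (Set.Icc a b) →
      Integrable (fun r => w r * ψ r) μ := by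
    intro w hw
    obtain ⟨C, hC⟩ := isCompact_Icc.exists_bound_of_continuousOn hw
    refine hint.bdd_mul (c := C) ?_ ?_
    · exact (hw.mono Set.Ioo_subset_Icc_self).aestronglyMeasurable measurableSet_Ioo
    · filter_upwards [ae_restrict_mem measurableSet_Ioo] with r hr
      exact hC r (Set.Ioo_subset_Icc_self hr)
  have hane : ∀ r ∈ Set.Icc a b, (r : ℝ) ^ 2 ≠ 0 := fun r hr =>
    pow_ne_zero 2 (ne_of_gt (lt_of_lt_of_le ha hr.1))
  have hinvcont : ContinuousOn (fun r : ℝ => ((r ^ 2)⁻¹)) (Set.Icc a b) :=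
    ((continuous_pow 2).continuousOn).inv₀ hane
  -- vanishing of all shifted moments
  have hmom : ∀ m : ℕ, ∫ r, ((r ^ 2)⁻¹) ^ (N + m) * ψ r ∂μ = 0 := by
    intro m
    have h := h0 (N + m) (Nat.le_add_right N m)
    rw [← h]
    apply integral_congr_ae
    filter_upwards with r
    rw [pow_mul, div_eq_mul_inv, inv_pow, mul_comm]
  -- vanishing against polynomials in (r^2)⁻¹ times ((r^2)⁻¹)^N
  have hpoly : ∀ p : Polynomial ℝ,
      ∫ r, (Polynomial.eval ((r ^ 2)⁻¹) p * ((r ^ 2)⁻¹) ^ N) * ψ r ∂μ = 0 := by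
    intro p
    have hrw : ∀ r : ℝ, (Polynomial.eval ((r ^ 2)⁻¹) p * ((r ^ 2)⁻¹) ^ N) * ψ r
        = ∑ k ∈ Finset.range (p.natDegree + 1),
            p.coeff k * (((r ^ 2)⁻¹) ^ (N + k) * ψ r) := by
      intro r
      rw [Polynomial.eval_eq_sum_range, Finset.sum_mul, Finset.sum_mul]
      refine Finset.sum_congr rfl fun k _ => ?_
      rw [pow_add]
      ring
    simp_rw [hrw]
    rw [integral_finset_sum]
    · refine Finset.sum_eq_zero fun k _ => ?_
      rw [integral_const_mul, hmom k, mul_zero]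
    · intro k _
      exact ((hIw _ (hinvcont.pow _)).const_mul _)
  -- vanishing against continuous functions
  have hcont : ∀ g : ℝ → ℝ, Continuous g → ∫ r, g r * ψ r ∂μ = 0 := by
    intro g hg
    set C₀ : ℝ := ((a ^ 2)⁻¹) ^ N * ∫ r, ‖ψ r‖ ∂μ with hC₀
    have hC₀nonneg : 0 ≤ C₀ :=
      mul_nonneg (pow_nonneg (inv_nonneg.2 (sq_nonneg a)) N)
        (integral_nonneg fun r => norm_nonneg _)
    have main : ∀ ε : ℝ, 0 < ε → |∫ r, g r * ψ r ∂μ| ≤ ε * C₀ := by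
      intro ε hε
      -- Stone–Weierstrass on Icc a b
      haveI : CompactSpace (Set.Icc a b) := isCompact_iff_compactSpace.mp isCompact_Icc
      have hfc : Continuous fun x : Set.Icc a b => ((x : ℝ) ^ 2)⁻¹ := by
        refine Continuous.inv₀ (by continuity) ?_
        exact fun x => hane x x.2
      set f₀ : C(Set.Icc a b, ℝ) := ⟨fun x => ((x : ℝ) ^ 2)⁻¹, hfc⟩ with hf₀
      set A : Subalgebra ℝ C(Set.Icc a b, ℝ) := Algebra.adjoin ℝ {f₀} with hA
      have hsep : A.SeparatesPoints := by
        intro x y hxy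
        refine ⟨_, ⟨f₀, Algebra.subset_adjoin (Set.mem_singleton _), rfl⟩, ?_⟩
        simp only [hf₀, ContinuousMap.coe_mk]
        intro hcontra
        apply hxy
        have hx : (0:ℝ) < (x:ℝ) := lt_of_lt_of_le ha x.2.1
        have hy : (0:ℝ) < (y:ℝ) := lt_of_lt_of_le ha y.2.1
        have h2 : ((x:ℝ)^2) = ((y:ℝ)^2) := by
          have := congrArg Inv.inv hcontra
          rwa [inv_inv, inv_inv] at this
        exact Subtype.ext (by nlinarith)
      have hgc : Continuous fun x : Set.Icc a b => g x * (x : ℝ) ^ (2 * N) := by continuity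
      obtain ⟨q, hq⟩ := ContinuousMap.exists_mem_subalgebra_near_continuous_of_separatesPoints
        A hsep (fun x : Set.Icc a b => g x * (x : ℝ) ^ (2 * N)) hgc ε hε
      have hqmem : (q : C(Set.Icc a b, ℝ)) ∈ (Polynomial.aeval (R := ℝ) f₀).range := by
        rw [← Algebra.adjoin_singleton_eq_range_aeval]; exact q.2
      obtain ⟨p, hp⟩ := hqmem
      have hp' : (Polynomial.aeval (R := ℝ) f₀) p = (q : C(Set.Icc a b, ℝ)) := hp
      set w : ℝ → ℝ := fun r => Polynomial.eval ((r ^ 2)⁻¹) p * ((r ^ 2)⁻¹) ^ N with hw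
      have hwcont : ContinuousOn w (Set.Icc a b) :=
        ((p.continuous_aeval).comp_continuousOn hinvcont).mul (hinvcont.pow N)
      have hqr : ∀ r, (hr : r ∈ Set.Icc a b) → |g r * r ^ (2*N) - Polynomial.eval ((r^2)⁻¹) p| < ε := by
        intro r hr
        have h := hq ⟨r, hr⟩
        rw [← abs_sub_comm]
        have hqx : ((q : C(Set.Icc a b, ℝ)) : Set.Icc a b → ℝ) ⟨r, hr⟩
            = Polynomial.eval ((r ^ 2)⁻¹) p := by
          rw [← hp', Polynomial.aeval_continuousMap_apply]
          rfl
        rw [Real.norm_eq_abs, hqx] at h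
        exact h
      -- pointwise bound
      have hbound : ∀ r ∈ Set.Ioo a b, ‖(g r - w r) * ψ r‖ ≤ ε * ((a^2)⁻¹)^N * ‖ψ r‖ := by
        intro r hr
        have hr' := Set.Ioo_subset_Icc_self hr
        have hrpos : (0:ℝ) < r := lt_of_lt_of_le ha hr'.1
        have hr2 : (0:ℝ) < r ^ 2 := by positivity
        have h1 : (r:ℝ) ^ (2*N) * ((r^2)⁻¹) ^ N = 1 := by
          rw [pow_mul, inv_pow, mul_inv_cancel₀ (pow_ne_zero _ hr2.ne')]
        have key : g r - w r = (g r * r ^ (2*N) - Polynomial.eval ((r^2)⁻¹) p) * ((r^2)⁻¹)^N := by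
          rw [sub_mul, mul_assoc, h1, mul_one]
        rw [key, norm_mul, norm_mul]
        have hinvle : ‖((r^2)⁻¹)^N‖ ≤ ((a^2)⁻¹)^N := by
          rw [Real.norm_eq_abs, abs_of_nonneg (by positivity)]
          refine pow_le_pow_left₀ (by positivity) ?_ N
          refine inv_anti₀ (by positivity) ?_
          nlinarith [hr'.1]
        refine mul_le_mul_of_nonneg_right ?_ (norm_nonneg _)
        exact mul_le_mul (le_of_lt (hqr r hr')) hinvle (norm_nonneg _) (le_of_lt hε)
      have hsub : ∫ r, (g r - w r) * ψ r ∂μ = ∫ r, g r * ψ r ∂μ := by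
        have : (fun r => (g r - w r) * ψ r) = fun r => g r * ψ r - w r * ψ r := by
          funext r; ring
        rw [this, integral_sub (hIw g hg.continuousOn) (hIw w hwcont), hpoly p, sub_zero]
      rw [← hsub]
      calc |∫ r, (g r - w r) * ψ r ∂μ| ≤ ∫ r, ‖(g r - w r) * ψ r‖ ∂μ := by
            exact norm_integral_le_integral_norm (fun r => (g r - w r) * ψ r)
        _ ≤ ∫ r, ε * ((a^2)⁻¹)^N * ‖ψ r‖ ∂μ := by
            refine integral_mono_of_nonneg ?_ ((hint.norm).const_mul _) ?_
            · filter_upwards with r using norm_nonneg _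
            · filter_upwards [ae_restrict_mem measurableSet_Ioo] with r hr using hbound r hr
        _ = ε * C₀ := by
            rw [integral_const_mul, hC₀, mul_assoc]
    have habs : |∫ r, g r * ψ r ∂μ| ≤ 0 := by
      refine le_of_forall_pos_le_add fun ε hε => ?_
      rw [zero_add]
      have hpos : 0 < ε / (C₀ + 1) := by positivity
      calc |∫ r, g r * ψ r ∂μ| ≤ ε / (C₀ + 1) * C₀ := main _ hpos
        _ ≤ ε / (C₀ + 1) * (C₀ + 1) := by
            refine mul_le_mul_of_nonneg_left (by linarith) (le_of_lt hpos)
        _ = ε := div_mul_cancel₀ ε (by linarith)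
    exact abs_eq_zero.mp (le_antisymm habs (abs_nonneg _))
  -- conclude via smooth compactly supported test functions
  have h := ae_eq_zero_of_integral_contDiff_smul_eq_zero (μ := μ) (f := ψ)
    (hint.locallyIntegrable)
    (fun g gdiff gsupp => by
      simp_rw [smul_eq_mul]
      exact hcont g gdiff.continuous)
  filter_upwards [h] with r hr using hr

theorem infinitely_many_nonzero_moments (a b : ℝ) (ha : 0 < a) (hab : a < b)
    (n₀ : ℕ) (ψ : ℝ → ℝ) (hψ : MemLp ψ 2 (volume.restrict (Set.Ioo a b))) :
    ({n : ℕ | n₀ ≤ n ∧ (∫ r in a..b, ψ r / r ^ (2 * n)) ≠ 0}.Finite →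
        ψ =ᵐ[volume.restrict (Set.Ioo a b)] 0) ∧
      (¬ ψ =ᵐ[volume.restrict (Set.Ioo a b)] 0 →
        {n : ℕ | n₀ ≤ n ∧ (∫ r in a..b, ψ r / r ^ (2 * n)) ≠ 0}.Infinite) := by
  haveI : IsFiniteMeasure (volume.restrict (Set.Ioo a b)) := by
    constructor
    rw [Measure.restrict_apply_univ]
    exact measure_Ioo_lt_top
  have hint : Integrable ψ (volume.restrict (Set.Ioo a b)) := hψ.integrable one_le_two
  have key : {n : ℕ | n₀ ≤ n ∧ (∫ r in a..b, ψ r / r ^ (2 * n)) ≠ 0}.Finite →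
      ψ =ᵐ[volume.restrict (Set.Ioo a b)] 0 := by
    intro hfin
    obtain ⟨M, hM⟩ := hfin.bddAbove
    refine key_total a b ha hab (max n₀ M + 1) ψ hint fun n hn => ?_
    have h1 : n₀ ≤ n := le_trans (le_trans (le_max_left _ _) (Nat.le_succ _)) hn
    have h2 : n ∉ {n : ℕ | n₀ ≤ n ∧ (∫ r in a..b, ψ r / r ^ (2 * n)) ≠ 0} := by
      intro hmem
      have := hM hmem
      omega
    have h3 : (∫ r in a..b, ψ r / r ^ (2 * n)) = 0 := by
      by_contra h
      exact h2 ⟨h1, h⟩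
    rw [← MeasureTheory.integral_Ioc_eq_integral_Ioo, ← intervalIntegral.integral_of_le hab.le]
    exact h3
  refine ⟨key, fun hne => ?_⟩
  intro hfin
  exact hne (key hfin)
end
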